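/- Let R be a Noetherian commutative ring, S a module-finite R-algebra, and W ⊆ R a multiplicative submonoid. Then the trace ideal of the localized extension W^{-1}R → W^{-1}S equals the localization of the trace ideal: τ_{W^{-1}S / W^{-1}R} = W^{-1}(τ_{S/R}) as ideals of W^{-1}R. -/

import Mathlib

/-- The trace ideal `τ_{S/R}`: the image of the evaluation-at-1 map `Hom_R(S,R) → R`. -/
def traceIdeal (R S : Type*) [CommRing R] [CommRing S] [Algebra R S] : Ideal R :=
  LinearMap.range ((LinearMap.applyₗ (1 : S)) : (S →ₗ[R] R) →ₗ[R] R)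

/-- The trace ideal commutes with localization: `τ_{W⁻¹S/W⁻¹R} = W⁻¹(τ_{S/R})`. -/
theorem trace_ideal_localization
    (R S : Type*) [CommRing R] [IsNoetherianRing R] [CommRing S] [Algebra R S]
    [Module.Finite R S] (W : Submonoid R)
    (Rₚ Sₚ : Type*) [CommRing Rₚ] [CommRing Sₚ]
    [Algebra R Rₚ] [IsLocalization W Rₚ]
    [Algebra S Sₚ] [IsLocalization (Algebra.algebraMapSubmonoid S W) Sₚ]
    [Algebra Rₚ Sₚ] [Algebra R Sₚ] [IsScalarTower R Rₚ Sₚ] [IsScalarTower R S Sₚ] :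
    traceIdeal Rₚ Sₚ = (traceIdeal R S).map (algebraMap R Rₚ) := by
  have hFP : Module.FinitePresentation R S := Module.finitePresentation_of_finite R S
  set fS : S →ₗ[R] Sₚ := (IsScalarTower.toAlgHom R S Sₚ).toLinearMap with hfS
  set fR : R →ₗ[R] Rₚ := Algebra.linearMap R Rₚ with hfR
  have instS : IsLocalizedModule W fS := inferInstance
  have instR : IsLocalizedModule W fR := inferInstance
  haveI : IsLocalizedModule W (IsLocalizedModule.map W fS fR) :=
    Module.FinitePresentation.isLocalizedModule_map W fS fR
  apply le_antisymm
  · rintro x ⟨g, rfl⟩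
    -- g : Sₚ →ₗ[Rₚ] Rₚ ; restrict scalars and use surjectivity of the localized hom module
    obtain ⟨⟨f, w⟩, hw⟩ := IsLocalizedModule.surj W (IsLocalizedModule.map W fS fR)
      (g.restrictScalars R)
    have h1 : (w : R) • g 1 = algebraMap R Rₚ (f 1) := by
      have := LinearMap.congr_fun hw (fS 1)
      rw [IsLocalizedModule.map_apply] at this
      have h1S : (1 : Sₚ) = fS 1 := by simp [hfS]
      rw [h1S]
      simp [hfR] at this
      exact this
    have hmem : algebraMap R Rₚ (f 1) ∈ (traceIdeal R S).map (algebraMap R Rₚ) :=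
      Ideal.mem_map_of_mem _ ⟨f, rfl⟩
    rw [← h1] at hmem
    have hu : IsUnit (algebraMap R Rₚ (w : R)) := IsLocalization.map_units Rₚ w
    obtain ⟨u, hu'⟩ := hu
    have : g 1 = ↑u⁻¹ * ((w : R) • g 1) := by
      rw [Algebra.smul_def, ← hu', ← mul_assoc, Units.inv_mul, one_mul]
    show g 1 ∈ _
    rw [this]
    exact Ideal.mul_mem_left _ _ hmem
  · rw [Ideal.map_le_iff_le_comap]
    rintro x ⟨f, rfl⟩
    -- f : S →ₗ[R] R; localize it and extend scalars
    refine ⟨((IsLocalizedModule.map W fS fR f).extendScalarsOfIsLocalization W Rₚ), ?_⟩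
    show IsLocalizedModule.map W fS fR f 1 = algebraMap R Rₚ (f 1)
    have h1S : (1 : Sₚ) = fS 1 := by simp [hfS]
    rw [h1S, IsLocalizedModule.map_apply]
    simp [hfR]
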